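/- arXiv:1703.04300 — 5 statements merged into one kernel-verified Lean document; each statement's English description precedes it below -/
import Mathlib

section
/- Let ε be a real number with 0 < ε ≤ 1 and let n be a real number with n ≥ 3^(1+1/ε). Then (n/3)^(1-ε²) ≥ n^(1-ε). -/
open Real

/-- Key numerical inequality in Lemma 1: if `0 < ε ≤ 1` and `n ≥ 3^(1+1/ε)`,
then `(n/3)^(1-ε²) ≥ n^(1-ε)` (real powers). -/
theorem pendant_key_inequality (ε n : ℝ) (hε : 0 < ε) (hε1 : ε ≤ 1)
    (hn : (3 : ℝ) ^ (1 + 1 / ε) ≤ n) :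
    (n / 3) ^ (1 - ε ^ 2) ≥ n ^ (1 - ε) := by
  have h3 : (0:ℝ) < 3 := by norm_num
  have hnpos : 0 < n := lt_of_lt_of_le (Real.rpow_pos_of_pos h3 _) hn
  have hexp : 0 ≤ ε * (1 - ε) := mul_nonneg hε.le (by linarith)
  have key : (3:ℝ) ^ (1 - ε ^ 2) ≤ n ^ (ε * (1 - ε)) := by
    calc (3:ℝ) ^ (1 - ε ^ 2) = ((3:ℝ) ^ (1 + 1/ε)) ^ (ε * (1 - ε)) := by
          rw [← Real.rpow_mul h3.le]
          congr 1
          field_simp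
          ring
      _ ≤ n ^ (ε * (1 - ε)) :=
          Real.rpow_le_rpow (Real.rpow_pos_of_pos h3 _).le hn hexp
  rw [ge_iff_le, Real.div_rpow hnpos.le h3.le,
    le_div_iff₀ (Real.rpow_pos_of_pos h3 _)]
  calc n ^ (1 - ε) * 3 ^ (1 - ε ^ 2) ≤ n ^ (1 - ε) * n ^ (ε * (1 - ε)) := by
        exact mul_le_mul_of_nonneg_left key (Real.rpow_nonneg hnpos.le _)
    _ = n ^ (1 - ε ^ 2) := by
        rw [← Real.rpow_add hnpos]; ring_nf
end

section
/- Let G' be a finite simple graph on vertex set V and let G be its pendant-pair graph. If S ⊆ V is an independent set of G' with |S| = t, then the family of paths {(a_v, v, b_v) : v ∈ S} is a family of t induced disjoint paths in G, where the path indexed by v connects the source-sink pair (a_v, b_v). -/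
open SimpleGraph

variable {V : Type*}

/-- Original vertex `v` inside the pendant-pair graph. -/
def orig (v : V) : V ⊕ (V ⊕ V) := Sum.inl v

/-- First pendant vertex `a_v` attached to `v`. -/
def pA (v : V) : V ⊕ (V ⊕ V) := Sum.inr (Sum.inl v)

/-- Second pendant vertex `b_v` attached to `v`. -/
def pB (v : V) : V ⊕ (V ⊕ V) := Sum.inr (Sum.inr v)

/-- The pendant-pair graph of `G'`: keep all edges of `G'` between original
vertices and attach to every vertex `v` the two pendant vertices `a_v`, `b_v`. -/
def pendantGraph (G' : SimpleGraph V) : SimpleGraph (V ⊕ (V ⊕ V)) :=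
  SimpleGraph.fromRel (fun x y =>
    (∃ u v : V, x = orig u ∧ y = orig v ∧ G'.Adj u v) ∨
    (∃ v : V, x = orig v ∧ (y = pA v ∨ y = pB v)))

lemma pendantGraph_adj_pA (G' : SimpleGraph V) (v : V) :
    (pendantGraph G').Adj (pA v) (orig v) :=
  ⟨by simp [pA, orig], Or.inr (Or.inr ⟨v, rfl, Or.inl rfl⟩)⟩

lemma pendantGraph_adj_pB (G' : SimpleGraph V) (v : V) :
    (pendantGraph G').Adj (orig v) (pB v) :=
  ⟨by simp [pB, orig], Or.inl (Or.inr ⟨v, rfl, Or.inr rfl⟩)⟩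

/-- The canonical path `a_v, v, b_v` in the pendant-pair graph. -/
def pathAVB (G' : SimpleGraph V) (v : V) : (pendantGraph G').Walk (pA v) (pB v) :=
  SimpleGraph.Walk.cons (pendantGraph_adj_pA G' v)
    (SimpleGraph.Walk.cons (pendantGraph_adj_pB G' v) SimpleGraph.Walk.nil)

/-- A walk is an induced path if it is a path and the only edges of the graph
between its vertices are its own edges. -/
def IsInducedPathW {α : Type*} (G : SimpleGraph α) {u v : α} (p : G.Walk u v) : Prop :=
  p.IsPath ∧ ∀ x ∈ p.support, ∀ y ∈ p.support, G.Adj x y → s(x, y) ∈ p.edges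

/-- Two walks are totally disjoint if they share no vertex and no vertex of one
is adjacent to a vertex of the other. -/
def WalksFarApart {α : Type*} (G : SimpleGraph α) {u v w z : α}
    (p : G.Walk u v) (q : G.Walk w z) : Prop :=
  ∀ x ∈ p.support, ∀ y ∈ q.support, x ≠ y ∧ ¬ G.Adj x y

lemma pendant_adj_iff (G' : SimpleGraph V) (x y : V ⊕ (V ⊕ V)) :
    (pendantGraph G').Adj x y ↔ x ≠ y ∧
      ((∃ u v : V, x = orig u ∧ y = orig v ∧ G'.Adj u v) ∨
       (∃ v : V, x = orig v ∧ (y = pA v ∨ y = pB v)) ∨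
       (∃ u v : V, y = orig u ∧ x = orig v ∧ G'.Adj u v) ∨
       (∃ v : V, y = orig v ∧ (x = pA v ∨ x = pB v))) := by
  simp only [pendantGraph, SimpleGraph.fromRel_adj]
  constructor
  · rintro ⟨hne, (h | h) | (h | h)⟩
    · exact ⟨hne, Or.inl h⟩
    · exact ⟨hne, Or.inr (Or.inl h)⟩
    · exact ⟨hne, Or.inr (Or.inr (Or.inl h))⟩
    · exact ⟨hne, Or.inr (Or.inr (Or.inr h))⟩
  · rintro ⟨hne, h | h | h | h⟩
    · exact ⟨hne, Or.inl (Or.inl h)⟩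
    · exact ⟨hne, Or.inl (Or.inr h)⟩
    · exact ⟨hne, Or.inr (Or.inl h)⟩
    · exact ⟨hne, Or.inr (Or.inr h)⟩

/-- If `S` is an independent set of `G'` of size `t`, then the `t` paths
`a_v, v, b_v` for `v ∈ S` form a family of induced disjoint paths in the
pendant-pair graph, the path indexed by `v` connecting the pair `(a_v, b_v)`. -/
theorem indepSet_gives_inducedDisjointPaths [Fintype V] [DecidableEq V]
    (G' : SimpleGraph V) (S : Finset V) (t : ℕ) (hcard : S.card = t)
    (hS : ∀ u ∈ S, ∀ v ∈ S, ¬ G'.Adj u v) :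
    (∀ v ∈ S, IsInducedPathW (pendantGraph G') (pathAVB G' v)) ∧
    (∀ u ∈ S, ∀ v ∈ S, u ≠ v →
      WalksFarApart (pendantGraph G') (pathAVB G' u) (pathAVB G' v)) := by
  constructor
  · intro v hv
    constructor
    · simp only [pathAVB, Walk.isPath_def, Walk.support_cons, Walk.support_nil]; simp [pA, pB, orig]
    · intro x hx y hy hadj
      simp only [pathAVB, Walk.support_cons, Walk.support_nil, List.mem_cons,
        List.mem_singleton, List.not_mem_nil, or_false] at hx hy
      simp only [pathAVB, Walk.edges_cons, Walk.edges_nil, List.mem_cons,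
        List.not_mem_nil, or_false]
      rw [pendant_adj_iff] at hadj
      obtain ⟨hne, h⟩ := hadj
      rcases hx with rfl | rfl | rfl <;> rcases hy with rfl | rfl | rfl <;>
        simp_all [orig, pA, pB, Sym2.eq_iff] <;>
        rcases h with ⟨a,b,h1,h2,_⟩ | ⟨a,h1,h2|h2⟩ | ⟨a,b,h1,h2,_⟩ | ⟨a,h1,h2|h2⟩ <;>
        simp_all
  · intro u hu v hv huv x hx y hy
    simp only [pathAVB, Walk.support_cons, Walk.support_nil, List.mem_cons,
      List.mem_singleton, List.not_mem_nil, or_false] at hx hy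
    have hadj := hS u hu v hv
    have hadj' := hS v hv u hu
    rcases hx with rfl | rfl | rfl <;> rcases hy with rfl | rfl | rfl <;>
      constructor <;>
      simp_all [pendant_adj_iff, orig, pA, pB] <;>
      intro h <;>
      (try rcases h with ⟨a,b,h1,h2,h3⟩ | ⟨a,h1,h2|h2⟩ | ⟨a,b,h1,h2,h3⟩ | ⟨a,h1,h2|h2⟩) <;>
      simp_all
end

section
/- Let G' be a finite simple graph on vertex set V and let G be its pendant-pair graph. Suppose S ⊆ V and for each v ∈ S there is a path P_v in G from a_v to b_v such that the family (P_v)_{v ∈ S} is a family of induced disjoint paths. Then S is an independent set of G'. -/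
open SimpleGraph

variable {V : Type*}

/-- If for each `v ∈ S` there is a path `P v` from `a_v` to `b_v` in the
pendant-pair graph such that the family is a family of induced disjoint paths,
then `S` is an independent set of `G'`. -/
theorem inducedDisjointPaths_gives_indepSet [Fintype V]
    (G' : SimpleGraph V) (S : Set V)
    (P : ∀ v ∈ S, (pendantGraph G').Walk (pA v) (pB v))
    (hind : ∀ v (hv : v ∈ S), IsInducedPathW (pendantGraph G') (P v hv))
    (hdisj : ∀ u v (hu : u ∈ S) (hv : v ∈ S), u ≠ v →
      WalksFarApart (pendantGraph G') (P u hu) (P v hv)) :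
    ∀ u ∈ S, ∀ v ∈ S, ¬ G'.Adj u v := by
  have hnb : ∀ (v : V) (y : V ⊕ (V ⊕ V)), (pendantGraph G').Adj (pA v) y → y = orig v := by
    intro v y hy
    obtain ⟨hne, h | h⟩ := hy
    · rcases h with ⟨a, b, h1, _, _⟩ | ⟨a, h1, _⟩ <;> simp [pA, orig] at h1
    · rcases h with ⟨a, b, _, h2, _⟩ | ⟨a, h1, h2 | h2⟩
      · simp [pA, orig] at h2
      · simp only [pA] at h2
        obtain rfl : a = v := by
          injection h2 with h2; injection h2 with h2; exact h2.symm
        exact h1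
      · simp [pA, pB] at h2
  have hmem : ∀ (v : V) (p : (pendantGraph G').Walk (pA v) (pB v)),
      orig v ∈ p.support := by
    intro v p
    cases p with
    | cons h q =>
        have := hnb v _ h
        subst this
        simp
  intro u hu v hv hadj
  rcases eq_or_ne u v with rfl | hne
  · exact G'.irrefl hadj
  · have h := hdisj u v hu hv hne (orig u) (hmem u _) (orig v) (hmem v _)
    exact h.2 ⟨by simp [orig, hne], Or.inl (Or.inl ⟨u, v, rfl, rfl, hadj⟩)⟩
end

section
/- Let G' be a finite simple graph on vertex set V and let G be its pendant-pair graph, with source-sink pairs (a_v, b_v) for v ∈ V. For every natural number t, G' has an independent set of size t if and only if there exists a set S ⊆ V with |S| = t and a family of induced disjoint paths in G consisting, for each v ∈ S, of a path from a_v to b_v. -/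
open SimpleGraph

variable {V : Type*}

section Aux
variable {G' : SimpleGraph V}

lemma adj_pA_iff (G' : SimpleGraph V) (v : V) (y : V ⊕ (V ⊕ V)) :
    (pendantGraph G').Adj (pA v) y ↔ y = orig v := by
  constructor
  · rintro ⟨hne, h | h⟩
    · rcases h with ⟨u', v', h1, -, -⟩ | ⟨w, h1, -⟩ <;> simp [pA, orig] at h1
    · rcases h with ⟨u', v', -, h2, -⟩ | ⟨w, h1, h2 | h2⟩
      · simp [pA, orig] at h2
      · simp only [pA] at h2
        obtain rfl : v = w := by simpa using h2
        exact h1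
      · simp [pA, pB] at h2
  · rintro rfl; exact pendantGraph_adj_pA G' v

lemma adj_pB_iff (G' : SimpleGraph V) (v : V) (y : V ⊕ (V ⊕ V)) :
    (pendantGraph G').Adj (pB v) y ↔ y = orig v := by
  constructor
  · rintro ⟨hne, h | h⟩
    · rcases h with ⟨u', v', h1, -, -⟩ | ⟨w, h1, -⟩ <;> simp [pB, orig] at h1
    · rcases h with ⟨u', v', -, h2, -⟩ | ⟨w, h1, h2 | h2⟩
      · simp [pB, orig] at h2
      · simp [pA, pB] at h2
      · simp only [pB] at h2
        obtain rfl : v = w := by simpa using h2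
        exact h1
  · rintro rfl; exact (pendantGraph_adj_pB G' v).symm

lemma adj_orig_orig_iff (G' : SimpleGraph V) (u v : V) :
    (pendantGraph G').Adj (orig u) (orig v) ↔ G'.Adj u v := by
  constructor
  · rintro ⟨hne, h | h⟩
    · rcases h with ⟨u', v', h1, h2, ha⟩ | ⟨w, -, h2 | h2⟩
      · obtain rfl : u = u' := by simpa [orig] using h1
        obtain rfl : v = v' := by simpa [orig] using h2
        exact ha
      · simp [pA, orig] at h2
      · simp [pB, orig] at h2
    · rcases h with ⟨u', v', h1, h2, ha⟩ | ⟨w, -, h2 | h2⟩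
      · obtain rfl : v = u' := by simpa [orig] using h1
        obtain rfl : u = v' := by simpa [orig] using h2
        exact ha.symm
      · simp [pA, orig] at h2
      · simp [pB, orig] at h2
  · intro h
    exact ⟨by simp [orig, h.ne], Or.inl (Or.inl ⟨u, v, rfl, rfl, h⟩)⟩

lemma pathAVB_support (G' : SimpleGraph V) (v : V) :
    (pathAVB G' v).support = [pA v, orig v, pB v] := by
  simp [pathAVB]

lemma pathAVB_induced (G' : SimpleGraph V) (v : V) :
    IsInducedPathW (pendantGraph G') (pathAVB G' v) := by
  constructor
  · rw [SimpleGraph.Walk.isPath_def, pathAVB_support]; simp [pA, pB, orig]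
  · intro x hx y hy hadj
    rw [pathAVB_support] at hx hy
    simp only [List.mem_cons, List.not_mem_nil, or_false] at hx hy
    have hedges : (pathAVB G' v).edges = [s(pA v, orig v), s(orig v, pB v)] := by
      simp [pathAVB]
    rw [hedges]
    rcases hx with rfl | rfl | rfl <;> rcases hy with rfl | rfl | rfl
    · exact absurd hadj (pendantGraph G').irrefl
    · simp
    · rw [adj_pA_iff] at hadj; simp [pB, orig] at hadj
    · rw [← Sym2.eq_swap]; simp [(adj_pA_iff G' v _).mp hadj.symm]
    · exact absurd hadj (pendantGraph G').irrefl
    · simp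
    · exact absurd ((adj_pB_iff G' v _).mp hadj) (by simp [pA, orig])
    · rw [← Sym2.eq_swap]; simp
    · exact absurd hadj (pendantGraph G').irrefl

lemma exists_snd {α : Type*} {G : SimpleGraph α} {u v : α} (hne : u ≠ v)
    (p : G.Walk u v) : ∃ x ∈ p.support, G.Adj u x := by
  cases p with
  | nil => exact absurd rfl hne
  | cons h q => exact ⟨_, by simp, h⟩

end Aux

/-- Correctness of the reduction in Lemma 2: `G'` has an independent set of
size `t` iff there are `t` source-sink pairs `(a_v, b_v)`, `v ∈ S`, that can
be connected by a family of induced disjoint paths in the pendant-pair graph. -/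
theorem indepSet_iff_inducedDisjointPaths [Fintype V] [DecidableEq V]
    (G' : SimpleGraph V) (t : ℕ) :
    (∃ S : Finset V, S.card = t ∧ ∀ u ∈ S, ∀ v ∈ S, ¬ G'.Adj u v) ↔
    (∃ S : Finset V, S.card = t ∧
      ∃ P : ∀ v ∈ S, (pendantGraph G').Walk (pA v) (pB v),
        (∀ v (hv : v ∈ S), IsInducedPathW (pendantGraph G') (P v hv)) ∧
        ∀ u v (hu : u ∈ S) (hv : v ∈ S), u ≠ v →
          WalksFarApart (pendantGraph G') (P u hu) (P v hv)) := by
  constructor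
  · rintro ⟨S, hcard, hind⟩
    refine ⟨S, hcard, fun v _ => pathAVB G' v, fun v hv => pathAVB_induced G' v, ?_⟩
    intro u v hu hv huv x hx y hy
    rw [pathAVB_support] at hx hy
    simp only [List.mem_cons, List.not_mem_nil, or_false] at hx hy
    have hGuv : ¬ G'.Adj u v := hind u hu v hv
    rcases hx with rfl | rfl | rfl <;> rcases hy with rfl | rfl | rfl <;>
      refine ⟨by simp [pA, pB, orig, huv], fun hadj => ?_⟩
    · exact absurd ((adj_pA_iff G' u _).mp hadj) (by simp [pA, orig])
    · exact absurd ((adj_pA_iff G' u _).mp hadj) (by simp [orig]; exact Ne.symm huv)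
    · exact absurd ((adj_pA_iff G' u _).mp hadj) (by simp [pB, orig])
    · exact absurd ((adj_pA_iff G' v _).mp hadj.symm) (by simp [orig]; exact huv)
    · exact hGuv ((adj_orig_orig_iff G' u v).mp hadj)
    · exact absurd ((adj_pB_iff G' v _).mp hadj.symm) (by simp [orig]; exact huv)
    · exact absurd ((adj_pB_iff G' u _).mp hadj) (by simp [pA, orig])
    · exact absurd ((adj_pB_iff G' u _).mp hadj) (by simp [orig]; exact Ne.symm huv)
    · exact absurd ((adj_pB_iff G' u _).mp hadj) (by simp [pB, orig])
  · rintro ⟨S, hcard, P, -, hfar⟩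
    refine ⟨S, hcard, ?_⟩
    intro u hu v hv hadj
    have huv : u ≠ v := hadj.ne
    have horig : ∀ w (hw : w ∈ S), orig w ∈ (P w hw).support := by
      intro w hw
      obtain ⟨x, hx, hxadj⟩ := exists_snd (by simp [pA, pB]) (P w hw)
      rwa [(adj_pA_iff G' w x).mp hxadj] at hx
    exact ((hfar u v hu hv huv (orig u) (horig u hu) (orig v) (horig v hv)).2)
      ((adj_orig_orig_iff G' u v).mpr hadj)
end

section
/- Let G be a finite simple graph and let S(G) be its subdivision graph. If P_1, …, P_t are pairwise vertex-disjoint paths in G, where P_i connects s_i to t_i, then the subdivided paths P_1', …, P_t' form a family of induced disjoint paths in S(G), where P_i' connects s_i to t_i, and P_i' is obtained from P_i by inserting between each pair of consecutive vertices u, w of P_i the subdivision vertex of the edge {u, w}. -/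
open SimpleGraph

variable {V : Type*}

/-- The subdivision graph of `G`: vertices are the vertices of `G` together
with one subdivision vertex for each edge, and the edges join each edge's
subdivision vertex to its two endpoints. -/
def subdivisionGraph (G : SimpleGraph V) : SimpleGraph (V ⊕ G.edgeSet) :=
  SimpleGraph.fromRel (fun x y =>
    ∃ (v : V) (e : G.edgeSet), x = Sum.inl v ∧ y = Sum.inr e ∧ v ∈ (e : Sym2 V))

lemma subdivisionGraph_adj_left (G : SimpleGraph V) {u x : V} (h : G.Adj u x) :
    (subdivisionGraph G).Adj (Sum.inl u) (Sum.inr ⟨s(u, x), h⟩) :=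
  ⟨by simp, Or.inl ⟨u, ⟨s(u, x), h⟩, rfl, rfl, Sym2.mem_mk_left u x⟩⟩

lemma subdivisionGraph_adj_right (G : SimpleGraph V) {u x : V} (h : G.Adj u x) :
    (subdivisionGraph G).Adj (Sum.inr ⟨s(u, x), h⟩) (Sum.inl x) :=
  ⟨by simp, Or.inr ⟨x, ⟨s(u, x), h⟩, rfl, rfl, Sym2.mem_mk_right u x⟩⟩

/-- The subdivision of a walk: between each pair of consecutive vertices `u, w`
insert the subdivision vertex of the edge `{u, w}`. -/
def subdivideWalk (G : SimpleGraph V) :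
    ∀ {u w : V}, G.Walk u w → (subdivisionGraph G).Walk (Sum.inl u) (Sum.inl w)
  | _, _, SimpleGraph.Walk.nil => SimpleGraph.Walk.nil
  | _, _, SimpleGraph.Walk.cons h p =>
      SimpleGraph.Walk.cons (subdivisionGraph_adj_left G h)
        (SimpleGraph.Walk.cons (subdivisionGraph_adj_right G h) (subdivideWalk G p))

lemma subdiv_adj_inl_inl (G : SimpleGraph V) (v w : V) :
    ¬ (subdivisionGraph G).Adj (Sum.inl v) (Sum.inl w) := by
  rintro ⟨-, h | h⟩ <;> obtain ⟨a, e, h1, h2, -⟩ := h <;> simp_all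

lemma subdiv_adj_inr_inr (G : SimpleGraph V) (e f : G.edgeSet) :
    ¬ (subdivisionGraph G).Adj (Sum.inr e) (Sum.inr f) := by
  rintro ⟨-, h | h⟩ <;> obtain ⟨a, e', h1, h2, -⟩ := h <;> simp_all

lemma subdiv_adj_inl_inr (G : SimpleGraph V) {v : V} {e : G.edgeSet}
    (h : (subdivisionGraph G).Adj (Sum.inl v) (Sum.inr e)) : v ∈ (e : Sym2 V) := by
  obtain ⟨-, h | h⟩ := h <;> obtain ⟨a, e', h1, h2, hm⟩ := h <;> simp_all

lemma mem_support_subdivide {G : SimpleGraph V} :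
    ∀ {u w : V} (p : G.Walk u w) (x : V ⊕ G.edgeSet),
    x ∈ (subdivideWalk G p).support ↔
      (∃ v ∈ p.support, x = Sum.inl v) ∨
      (∃ e : G.edgeSet, (e : Sym2 V) ∈ p.edges ∧ x = Sum.inr e)
  | _, _, SimpleGraph.Walk.nil, x => by simp [subdivideWalk]
  | _, _, SimpleGraph.Walk.cons h p, x => by
    simp only [subdivideWalk, SimpleGraph.Walk.support_cons, SimpleGraph.Walk.edges_cons,
      List.mem_cons, mem_support_subdivide p x]
    constructor
    · rintro (rfl | rfl | (⟨v, hv, rfl⟩ | ⟨e, he, rfl⟩))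
      · exact Or.inl ⟨_, Or.inl rfl, rfl⟩
      · exact Or.inr ⟨_, Or.inl rfl, rfl⟩
      · exact Or.inl ⟨v, Or.inr hv, rfl⟩
      · exact Or.inr ⟨e, Or.inr he, rfl⟩
    · rintro (⟨v, hv | hv, rfl⟩ | ⟨e, he | he, rfl⟩)
      · exact Or.inl (by rw [hv])
      · exact Or.inr (Or.inr (Or.inl ⟨v, hv, rfl⟩))
      · exact Or.inr (Or.inl (congrArg Sum.inr (Subtype.ext he)))
      · exact Or.inr (Or.inr (Or.inr ⟨e, he, rfl⟩))

lemma mem_edges_subdivide {G : SimpleGraph V} :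
    ∀ {u w : V} (p : G.Walk u w) (e : G.edgeSet) (v : V),
    (e : Sym2 V) ∈ p.edges → v ∈ (e : Sym2 V) →
    s(Sum.inl v, Sum.inr e) ∈ (subdivideWalk G p).edges
  | _, _, SimpleGraph.Walk.nil, e, v => by simp
  | _, _, SimpleGraph.Walk.cons h p, e, v => by
    intro he hv
    simp only [SimpleGraph.Walk.edges_cons, List.mem_cons] at he
    simp only [subdivideWalk, SimpleGraph.Walk.edges_cons, List.mem_cons]
    rcases he with he | he
    · obtain rfl : e = ⟨s(_, _), h⟩ := Subtype.ext he
      rw [he] at hv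
      rcases Sym2.mem_iff.mp hv with rfl | rfl
      · exact Or.inl rfl
      · exact Or.inr (Or.inl (Sym2.eq_swap))
    · exact Or.inr (Or.inr (mem_edges_subdivide p e v he hv))

lemma mem_support_of_sym2_mem_edges {G : SimpleGraph V} {u w : V} (p : G.Walk u w)
    {q : Sym2 V} {v : V} (hq : q ∈ p.edges) (hv : v ∈ q) : v ∈ p.support := by
  induction q using Sym2.ind with
  | _ a b =>
    rcases Sym2.mem_iff.mp hv with rfl | rfl
    · exact p.fst_mem_support_of_mem_edges hq
    · exact p.snd_mem_support_of_mem_edges hq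

lemma subdivide_isPath {G : SimpleGraph V} :
    ∀ {u w : V} (p : G.Walk u w), p.IsPath → (subdivideWalk G p).IsPath
  | _, _, SimpleGraph.Walk.nil, _ => SimpleGraph.Walk.IsPath.nil
  | _, _, SimpleGraph.Walk.cons h p, hp => by
    rw [SimpleGraph.Walk.cons_isPath_iff] at hp
    apply SimpleGraph.Walk.IsPath.mk'
    simp only [subdivideWalk, SimpleGraph.Walk.support_cons, List.nodup_cons]
    refine ⟨?_, ?_, (subdivide_isPath p hp.1).support_nodup⟩
    · simp only [List.mem_cons, mem_support_subdivide]
      rintro (h1 | (⟨v, hv, h2⟩ | ⟨e, he, h2⟩))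
      · exact absurd h1 (by simp)
      · exact hp.2 (Sum.inl.inj h2 ▸ hv)
      · exact absurd h2 (by simp)
    · rw [mem_support_subdivide]
      rintro (⟨v, hv, h2⟩ | ⟨e, he, h2⟩)
      · exact absurd h2 (by simp)
      · obtain rfl := Sum.inr.inj h2
        exact hp.2 (p.fst_mem_support_of_mem_edges he)


/-- If `P_1, …, P_t` are pairwise vertex-disjoint paths in `G`, with `P_i`
connecting `s i` to `t' i`, then the subdivided paths form a family of induced
disjoint paths in the subdivision graph, the `i`-th connecting `s i` to `t' i`. -/
theorem subdivide_disjoint_paths_induced [Fintype V] (G : SimpleGraph V)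
    (t : ℕ) (s t' : Fin t → V) (P : ∀ i, G.Walk (s i) (t' i))
    (hpath : ∀ i, (P i).IsPath)
    (hdisj : ∀ i j, i ≠ j → ∀ x ∈ (P i).support, x ∉ (P j).support) :
    (∀ i, IsInducedPathW (subdivisionGraph G) (subdivideWalk G (P i))) ∧
    ∀ i j, i ≠ j →
      WalksFarApart (subdivisionGraph G) (subdivideWalk G (P i)) (subdivideWalk G (P j)) := by
  constructor
  · intro i
    refine ⟨subdivide_isPath (P i) (hpath i), ?_⟩
    intro x hx y hy hadj
    match x, y with
    | Sum.inl v, Sum.inl w => exact absurd hadj (subdiv_adj_inl_inl G v w)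
    | Sum.inr e, Sum.inr f => exact absurd hadj (subdiv_adj_inr_inr G e f)
    | Sum.inl v, Sum.inr e =>
      rw [mem_support_subdivide] at hy
      rcases hy with ⟨w, _, h2⟩ | ⟨f, hf, h2⟩
      · exact absurd h2 (by simp)
      · obtain rfl := Sum.inr.inj h2
        exact mem_edges_subdivide (P i) e v hf (subdiv_adj_inl_inr G hadj)
    | Sum.inr e, Sum.inl v =>
      rw [mem_support_subdivide] at hx
      rcases hx with ⟨w, _, h2⟩ | ⟨f, hf, h2⟩
      · exact absurd h2 (by simp)
      · obtain rfl := Sum.inr.inj h2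
        rw [Sym2.eq_swap]
        exact mem_edges_subdivide (P i) e v hf (subdiv_adj_inl_inr G hadj.symm)
  · intro i j hij x hx y hy
    rw [mem_support_subdivide] at hx hy
    have key : ∀ v : V, v ∈ (P i).support → v ∉ (P j).support := hdisj i j hij
    match x, y with
    | Sum.inl v, Sum.inl w =>
      rcases hx with ⟨v', hv, h2⟩ | ⟨f, hf, h2⟩
      · obtain rfl := Sum.inl.inj h2
        rcases hy with ⟨w', hw, h2⟩ | ⟨f, hf, h2⟩
        · obtain rfl := Sum.inl.inj h2
          refine ⟨fun hvw => key v hv (Sum.inl.inj hvw ▸ hw), subdiv_adj_inl_inl G v w⟩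
        · exact absurd h2 (by simp)
      · exact absurd h2 (by simp)
    | Sum.inr e, Sum.inr f =>
      rcases hx with ⟨v', hv, h2⟩ | ⟨e', he, h2⟩
      · exact absurd h2 (by simp)
      · obtain rfl := Sum.inr.inj h2
        rcases hy with ⟨w', hw, h2⟩ | ⟨f', hf, h2⟩
        · exact absurd h2 (by simp)
        · obtain rfl := Sum.inr.inj h2
          refine ⟨fun hef => ?_, subdiv_adj_inr_inr G e f⟩
          obtain rfl := Sum.inr.inj hef
          have ha : s i ∈ (P i).support := (P i).start_mem_support
          obtain ⟨a, hae⟩ : ∃ a, a ∈ (e : Sym2 V) := by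
            induction (e : Sym2 V) using Sym2.ind with
            | _ a b => exact ⟨a, Sym2.mem_mk_left a b⟩
          exact key a (mem_support_of_sym2_mem_edges (P i) he hae)
            (mem_support_of_sym2_mem_edges (P j) hf hae)
    | Sum.inl v, Sum.inr e =>
      refine ⟨by simp, fun hadj => ?_⟩
      rcases hx with ⟨v', hv, h2⟩ | ⟨e', he, h2⟩
      · obtain rfl := Sum.inl.inj h2
        rcases hy with ⟨w', hw, h2⟩ | ⟨f', hf, h2⟩
        · exact absurd h2 (by simp)
        · obtain rfl := Sum.inr.inj h2
          exact key v hv (mem_support_of_sym2_mem_edges (P j) hf (subdiv_adj_inl_inr G hadj))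
      · exact absurd h2 (by simp)
    | Sum.inr e, Sum.inl v =>
      refine ⟨by simp, fun hadj => ?_⟩
      rcases hx with ⟨v', hv, h2⟩ | ⟨e', he, h2⟩
      · exact absurd h2 (by simp)
      · obtain rfl := Sum.inr.inj h2
        rcases hy with ⟨w', hw, h2⟩ | ⟨f', hf, h2⟩
        · obtain rfl := Sum.inl.inj h2
          exact key v (mem_support_of_sym2_mem_edges (P i) he (subdiv_adj_inl_inr G hadj.symm)) hw
        · exact absurd h2 (by simp)
end
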